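/- Let A ∈ SL(2,ℝ) with ‖A‖ > 1, and suppose v is a unit vector with |A⁻¹ v| = R < 1. Then the angle between the line spanned by v and the contracting direction S(A⁻¹) of A⁻¹ satisfies ∡(span v, S(A⁻¹)) ≤ (π/2)·R/‖A‖. -/

import Mathlib

open Matrix Real

noncomputable def matCLM (A : Matrix (Fin 2) (Fin 2) ℝ) :
    EuclideanSpace ℝ (Fin 2) →L[ℝ] EuclideanSpace ℝ (Fin 2) :=
  Matrix.toEuclideanCLM (𝕜 := ℝ) A

lemma matCLM_mul (M N : Matrix (Fin 2) (Fin 2) ℝ) (x : EuclideanSpace ℝ (Fin 2)) :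
    matCLM (M*N) x = matCLM M (matCLM N x) := by
  simp [matCLM, _root_.map_mul]

lemma matCLM_one (x : EuclideanSpace ℝ (Fin 2)) : matCLM 1 x = x := by
  simp [matCLM, _root_.map_one]

lemma matCLM_transpose (M : Matrix (Fin 2) (Fin 2) ℝ) : matCLM Mᵀ = star (matCLM M) := by
  rw [matCLM, matCLM, ← map_star]
  rw [Matrix.star_eq_conjTranspose, Matrix.conjTranspose_eq_transpose_of_trivial]

lemma norm_matCLM_transpose (M : Matrix (Fin 2) (Fin 2) ℝ) : ‖matCLM Mᵀ‖ = ‖matCLM M‖ := by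
  rw [matCLM_transpose, ContinuousLinearMap.star_eq_adjoint]
  exact (ContinuousLinearMap.adjoint
    (E := EuclideanSpace ℝ (Fin 2)) (F := EuclideanSpace ℝ (Fin 2)) (𝕜 := ℝ)).norm_map _

lemma matCLM_apply (M : Matrix (Fin 2) (Fin 2) ℝ) (x : EuclideanSpace ℝ (Fin 2)) (i : Fin 2) :
    matCLM M x i = M i 0 * x 0 + M i 1 * x 1 := by
  have h : (matCLM M x).ofLp = Matrix.toLin' M (WithLp.ofLp x) :=
    Matrix.ofLp_toEuclideanCLM (𝕜 := ℝ) M x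
  rw [h]
  simp [Matrix.toLin'_apply, Matrix.mulVec, dotProduct, Fin.sum_univ_two]

lemma J_isometry (x : EuclideanSpace ℝ (Fin 2)) : ‖matCLM !![0,-1;1,0] x‖ = ‖x‖ := by
  have h1 : ∀ y : EuclideanSpace ℝ (Fin 2), ‖y‖ = Real.sqrt ((y 0)^2 + (y 1)^2) := by
    intro y
    rw [EuclideanSpace.norm_eq]
    simp [Fin.sum_univ_two, sq_abs]
  rw [h1, h1, matCLM_apply, matCLM_apply]
  norm_num
  ring_nf

lemma Jt_isometry (x : EuclideanSpace ℝ (Fin 2)) : ‖matCLM !![0,-1;1,0]ᵀ x‖ = ‖x‖ := by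
  have h1 : ∀ y : EuclideanSpace ℝ (Fin 2), ‖y‖ = Real.sqrt ((y 0)^2 + (y 1)^2) := by
    intro y
    rw [EuclideanSpace.norm_eq]
    simp [Fin.sum_univ_two, sq_abs]
  rw [h1, h1, matCLM_apply, matCLM_apply]
  norm_num
  ring_nf

lemma inv_eq_conj (A : Matrix (Fin 2) (Fin 2) ℝ) (hA : A.det = 1) :
    A⁻¹ = !![0,-1;1,0] * Aᵀ * !![0,-1;1,0]ᵀ := by
  rw [Matrix.inv_def, hA]
  ext i j
  fin_cases i <;> fin_cases j <;>
    simp [Matrix.mul_apply, Fin.sum_univ_two, Matrix.adjugate_fin_two, Matrix.vecMul,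
      dotProduct, Matrix.vecHead, Matrix.vecTail]

lemma transpose_eq_conj (A : Matrix (Fin 2) (Fin 2) ℝ) (hA : A.det = 1) :
    Aᵀ = !![0,-1;1,0]ᵀ * A⁻¹ * !![0,-1;1,0] := by
  rw [inv_eq_conj A hA]
  ext i j
  fin_cases i <;> fin_cases j <;>
    simp [Matrix.mul_apply, Fin.sum_univ_two, Matrix.vecMul,
      dotProduct, Matrix.vecHead, Matrix.vecTail]

lemma norm_matCLM_inv (A : Matrix (Fin 2) (Fin 2) ℝ) (hA : A.det = 1) :
    ‖matCLM A⁻¹‖ = ‖matCLM A‖ := by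
  rw [← norm_matCLM_transpose A]
  apply le_antisymm
  · apply ContinuousLinearMap.opNorm_le_bound _ (norm_nonneg _)
    intro x
    calc ‖matCLM A⁻¹ x‖ = ‖matCLM Aᵀ (matCLM !![0,-1;1,0]ᵀ x)‖ := by
          rw [inv_eq_conj A hA, matCLM_mul, matCLM_mul, J_isometry]
      _ ≤ ‖matCLM Aᵀ‖ * ‖matCLM !![0,-1;1,0]ᵀ x‖ := ContinuousLinearMap.le_opNorm _ _
      _ = ‖matCLM Aᵀ‖ * ‖x‖ := by rw [Jt_isometry]
  · apply ContinuousLinearMap.opNorm_le_bound _ (norm_nonneg _)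
    intro x
    calc ‖matCLM Aᵀ x‖ = ‖matCLM A⁻¹ (matCLM !![0,-1;1,0] x)‖ := by
          rw [transpose_eq_conj A hA, matCLM_mul, matCLM_mul, Jt_isometry]
      _ ≤ ‖matCLM A⁻¹‖ * ‖matCLM !![0,-1;1,0] x‖ := ContinuousLinearMap.le_opNorm _ _
      _ = ‖matCLM A⁻¹‖ * ‖x‖ := by rw [J_isometry]

set_option maxHeartbeats 1000000 in
theorem stmt_15 (A : Matrix (Fin 2) (Fin 2) ℝ) (hA : A.det = 1)
    (hnorm : 1 < ‖matCLM A‖)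
    (v : EuclideanSpace ℝ (Fin 2)) (hv : ‖v‖ = 1)
    (R : ℝ) (hR : ‖matCLM A⁻¹ v‖ = R) (hR1 : R < 1)
    (s : EuclideanSpace ℝ (Fin 2)) (hs : ‖s‖ = 1)
    (hscon : ‖matCLM A⁻¹ s‖ = ‖matCLM A⁻¹‖⁻¹) :
    Real.arccos |inner (𝕜 := ℝ) v s| ≤ (π / 2) * R / ‖matCLM A‖ := by
  set B := matCLM A⁻¹ with hB
  set N : ℝ := ‖matCLM A‖ with hN
  have hNB : ‖B‖ = N := norm_matCLM_inv A hA
  have hN1 : 1 < N := hnorm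
  have hN0 : 0 < N := by linarith
  -- Step 1: lower bound for B
  have hAAinv : A * A⁻¹ = 1 := Matrix.mul_nonsing_inv A (by simp [hA])
  have hlow : ∀ x : EuclideanSpace ℝ (Fin 2), ‖x‖ ≤ N * ‖B x‖ := by
    intro x
    calc ‖x‖ = ‖matCLM A (B x)‖ := by
          rw [hB, ← matCLM_mul, hAAinv, matCLM_one]
      _ ≤ ‖matCLM A‖ * ‖B x‖ := ContinuousLinearMap.le_opNorm _ _
  have hlowsq : ∀ x : EuclideanSpace ℝ (Fin 2), ‖x‖^2 ≤ N^2 * ‖B x‖^2 := by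
    intro x
    have := hlow x
    nlinarith [norm_nonneg x, norm_nonneg (B x)]
  -- orthogonal vector t
  set t : EuclideanSpace ℝ (Fin 2) := WithLp.toLp 2 (![-(s 1), s 0] : Fin 2 → ℝ) with ht_def
  have ht0 : t 0 = -(s 1) := rfl
  have ht1 : t 1 = s 0 := rfl
  have hinner : ∀ x y : EuclideanSpace ℝ (Fin 2),
      inner (𝕜 := ℝ) x y = x 0 * y 0 + x 1 * y 1 := by
    intro x y
    rw [PiLp.inner_apply, Fin.sum_univ_two]
    simp [RCLike.inner_apply]
    ring
  have hnormsq : ∀ x : EuclideanSpace ℝ (Fin 2), ‖x‖^2 = x 0 ^ 2 + x 1 ^ 2 := by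
    intro x
    rw [← real_inner_self_eq_norm_sq, hinner]
    ring
  have hs2 : s 0 ^ 2 + s 1 ^ 2 = 1 := by
    rw [← hnormsq, hs]; norm_num
  have hst : inner (𝕜 := ℝ) s t = 0 := by rw [hinner, ht0, ht1]; ring
  have ht : ‖t‖ = 1 := by
    have h2 : ‖t‖^2 = 1 := by rw [hnormsq, ht0, ht1]; nlinarith
    nlinarith [norm_nonneg t]
  -- decomposition
  have hdec : ∀ x : EuclideanSpace ℝ (Fin 2),
      x = (inner (𝕜 := ℝ) x s) • s + (inner (𝕜 := ℝ) x t) • t := by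
    intro x
    have h0 : x 0 = (inner (𝕜 := ℝ) x s) * s 0 + (inner (𝕜 := ℝ) x t) * (-(s 1)) := by
      rw [hinner, hinner, ht0, ht1]
      linear_combination (-(x 0)) * hs2
    have h1 : x 1 = (inner (𝕜 := ℝ) x s) * s 1 + (inner (𝕜 := ℝ) x t) * (s 0) := by
      rw [hinner, hinner, ht0, ht1]
      linear_combination (-(x 1)) * hs2
    ext i
    fin_cases i
    · exact h0
    · exact h1
  have hparseval : ∀ x : EuclideanSpace ℝ (Fin 2),
      (inner (𝕜 := ℝ) x s)^2 + (inner (𝕜 := ℝ) x t)^2 = ‖x‖^2 := by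
    intro x
    rw [hinner, hinner, hnormsq, ht0, ht1]
    linear_combination (x 0 ^ 2 + x 1 ^ 2) * hs2
  -- ‖Bs‖ value
  have hBs : ‖B s‖ = N⁻¹ := by rw [hscon, hNB]
  -- orthogonality of images
  have hBst : inner (𝕜 := ℝ) (B s) (B t) = 0 := by
    set c : ℝ := inner (𝕜 := ℝ) (B s) (B t) with hc
    set C : ℝ := ‖B t‖^2 - N⁻¹^2 with hC
    have hq : ∀ r : ℝ, 0 ≤ C * (r*r) + (2*c) * r + 0 := by
      intro r
      have h1 : ‖B (s + r • t)‖^2 = N⁻¹^2 + 2*c*r + r^2 * ‖B t‖^2 := by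
        rw [map_add, _root_.map_smul, norm_add_sq_real, real_inner_smul_right, ← hc, hBs,
          norm_smul, Real.norm_eq_abs, mul_pow, sq_abs]
        ring
      have h2 : ‖s + r • t‖^2 = 1 + r^2 := by
        rw [norm_add_sq_real, real_inner_smul_right, hst, norm_smul, hs, ht]
        simp [sq_abs]
      have h3 := hlowsq (s + r • t)
      rw [h1, h2] at h3
      have h4 : N^2 * N⁻¹^2 = 1 := by field_simp
      have h5 : N^2 * N⁻¹^2 * r^2 = r^2 := by rw [h4]; ring
      have key : 0 ≤ N^2 * (C * (r*r) + (2*c) * r + 0) := by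
        have heq : N^2 * (C * (r*r) + (2*c) * r + 0) =
            N^2 * (N⁻¹^2 + 2*c*r + r^2 * ‖B t‖^2) - N^2 * N⁻¹^2 - N^2 * N⁻¹^2 * r^2 := by
          rw [hC]; ring
        rw [heq, h4]
        linarith [h3, h5]
      nlinarith [key, mul_pos hN0 hN0]
    have hd := discrim_le_zero hq
    rw [discrim] at hd
    nlinarith
  -- Bt is large
  have hBt : N ≤ ‖B t‖ := by
    have hbound : ‖B‖ ≤ max N⁻¹ ‖B t‖ := by
      apply ContinuousLinearMap.opNorm_le_bound _ (le_trans (inv_nonneg.2 (le_of_lt hN0)) (le_max_left _ _))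
      intro x
      have hBx : ‖B x‖^2 = (inner (𝕜 := ℝ) x s)^2 * N⁻¹^2 + (inner (𝕜 := ℝ) x t)^2 * ‖B t‖^2 := by
        conv_lhs => rw [hdec x]
        rw [map_add, _root_.map_smul, _root_.map_smul, norm_add_sq_real, real_inner_smul_left,
          real_inner_smul_right, hBst, norm_smul, norm_smul, hBs, Real.norm_eq_abs,
          Real.norm_eq_abs, mul_pow, mul_pow, sq_abs, sq_abs]
        ring
      have hx2 := hparseval x
      have hmax : 0 ≤ max N⁻¹ ‖B t‖ := le_trans (inv_nonneg.2 (le_of_lt hN0)) (le_max_left _ _)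
      have h1 : N⁻¹ ≤ max N⁻¹ ‖B t‖ := le_max_left _ _
      have h2 : ‖B t‖ ≤ max N⁻¹ ‖B t‖ := le_max_right _ _
      have hsq : ‖B x‖^2 ≤ (max N⁻¹ ‖B t‖)^2 * ‖x‖^2 := by
        rw [hBx, ← hx2]
        have hi : 0 ≤ N⁻¹ := inv_nonneg.2 (le_of_lt hN0)
        have e1 : N⁻¹^2 ≤ (max N⁻¹ ‖B t‖)^2 := pow_le_pow_left₀ hi h1 2
        have e2 : ‖B t‖^2 ≤ (max N⁻¹ ‖B t‖)^2 := pow_le_pow_left₀ (norm_nonneg _) h2 2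
        have p1 : (inner (𝕜 := ℝ) x s)^2 * N⁻¹^2 ≤ (inner (𝕜 := ℝ) x s)^2 * (max N⁻¹ ‖B t‖)^2 :=
          mul_le_mul_of_nonneg_left e1 (sq_nonneg _)
        have p2 : (inner (𝕜 := ℝ) x t)^2 * ‖B t‖^2 ≤ (inner (𝕜 := ℝ) x t)^2 * (max N⁻¹ ‖B t‖)^2 :=
          mul_le_mul_of_nonneg_left e2 (sq_nonneg _)
        nlinarith [p1, p2]
      have := Real.sqrt_le_sqrt hsq
      rwa [Real.sqrt_sq (norm_nonneg _), Real.sqrt_mul (sq_nonneg _), Real.sqrt_sq hmax,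
        Real.sqrt_sq (norm_nonneg _)] at this
    rw [hNB] at hbound
    rcases le_max_iff.1 hbound with h | h
    · exfalso
      have : N⁻¹ < 1 := inv_lt_one_of_one_lt₀ hN1
      linarith
    · exact h
  -- bound on the t-component of v
  have hbv : |inner (𝕜 := ℝ) v t| ≤ R / N := by
    have hBv : ‖B v‖^2 = (inner (𝕜 := ℝ) v s)^2 * N⁻¹^2 + (inner (𝕜 := ℝ) v t)^2 * ‖B t‖^2 := by
      conv_lhs => rw [hdec v]
      rw [map_add, _root_.map_smul, _root_.map_smul, norm_add_sq_real, real_inner_smul_left,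
        real_inner_smul_right, hBst, norm_smul, norm_smul, hBs, Real.norm_eq_abs,
        Real.norm_eq_abs, mul_pow, mul_pow, sq_abs, sq_abs]
      ring
    rw [hR] at hBv
    have hR0 : 0 ≤ R := by rw [← hR]; exact norm_nonneg _
    have h1 : (inner (𝕜 := ℝ) v t)^2 * N^2 ≤ R^2 := by
      have e : N^2 ≤ ‖B t‖^2 := pow_le_pow_left₀ (le_of_lt hN0) hBt 2
      have p : (inner (𝕜 := ℝ) v t)^2 * N^2 ≤ (inner (𝕜 := ℝ) v t)^2 * ‖B t‖^2 :=
        mul_le_mul_of_nonneg_left e (sq_nonneg _)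
      have q : 0 ≤ (inner (𝕜 := ℝ) v s)^2 * N⁻¹^2 := by positivity
      linarith [p, q]
    have h2 : (|inner (𝕜 := ℝ) v t| * N)^2 ≤ (R)^2 := by
      rw [mul_pow, sq_abs]; exact h1
    have h3 : |inner (𝕜 := ℝ) v t| * N ≤ R := by
      have h4 := Real.sqrt_le_sqrt h2
      rwa [Real.sqrt_sq (by positivity), Real.sqrt_sq hR0] at h4
    rw [le_div_iff₀ hN0]
    exact h3
  -- final angle computation
  have ha1 : |inner (𝕜 := ℝ) v s| ≤ 1 := by
    have := abs_real_inner_le_norm v s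
    rwa [hv, hs, mul_one] at this
  have ha0 : 0 ≤ |inner (𝕜 := ℝ) v s| := abs_nonneg _
  set a : ℝ := |inner (𝕜 := ℝ) v s| with hadef
  have hθ0 : 0 ≤ arccos a := Real.arccos_nonneg a
  have hθπ : arccos a ≤ π / 2 := by
    rw [Real.arccos_le_pi_div_two]; exact ha0
  have hsin : Real.sin (arccos a) = Real.sqrt (1 - a^2) := Real.sin_arccos a
  have hsinval : Real.sin (arccos a) = |inner (𝕜 := ℝ) v t| := by
    rw [hsin]
    have : 1 - a^2 = (inner (𝕜 := ℝ) v t)^2 := by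
      have := hparseval v
      rw [hv] at this
      rw [hadef, sq_abs]
      nlinarith
    rw [this, Real.sqrt_sq_eq_abs]
  have hjordan : 2 / π * arccos a ≤ Real.sin (arccos a) := Real.mul_le_sin hθ0 hθπ
  have hπ0 : 0 < π := Real.pi_pos
  have : arccos a ≤ π / 2 * |inner (𝕜 := ℝ) v t| := by
    rw [← hsinval]
    have h := hjordan
    calc arccos a = (π/2) * (2/π * arccos a) := by field_simp
      _ ≤ (π/2) * Real.sin (arccos a) := by
          apply mul_le_mul_of_nonneg_left h
          positivity
  calc arccos a ≤ π / 2 * |inner (𝕜 := ℝ) v t| := this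
    _ ≤ π / 2 * (R / N) := by
        apply mul_le_mul_of_nonneg_left hbv
        positivity
    _ = π / 2 * R / N := by ring
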